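/- Let (X,p) be a partial metric space and let A_1, …, A_k be nonempty sequentially closed subsets of X, at least one of which is 0-compact. Suppose T : A_1 ∪ … ∪ A_k → A_1 ∪ … ∪ A_k satisfies (1) T(A_i) ⊆ A_{i+1} for 1 ≤ i ≤ k (where A_{k+1} = A_1), and (2) p(Tx,Ty) < p(x,y) for all x ∈ A_i and y ∈ A_{i+1} with x ≠ y, 1 ≤ i ≤ k. Then T has a unique fixed point, which lies in A_1 ∩ … ∩ A_k. -/

import Mathlib

open Filter Topology
open Fin.NatCast Fin.CommRing

/-- A partial metric on a type `X`. -/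
structure IsPartialMetric {X : Type*} (p : X → X → ℝ) : Prop where
  nonneg : ∀ x y, 0 ≤ p x y
  symm : ∀ x y, p x y = p y x
  eq_of : ∀ x y, p x x = p x y → p x y = p y y → x = y
  self_le : ∀ x y, p x x ≤ p x y
  triangle : ∀ x y z, p x z + p y y ≤ p x y + p y z

/-- A sequence `x` converges to `a` in the partial metric `p`:
`lim_{n→∞} p(a, x n) = p(a,a)`. -/
def PConverges {X : Type*} (p : X → X → ℝ) (x : ℕ → X) (a : X) : Prop :=
  Tendsto (fun n => p a (x n)) atTop (𝓝 (p a a))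

/-- A sequence is `0`-Cauchy: `lim_{m,n→∞} p(x n, x m) = 0`. -/
def PZeroCauchy {X : Type*} (p : X → X → ℝ) (x : ℕ → X) : Prop :=
  Tendsto (fun mn : ℕ × ℕ => p (x mn.1) (x mn.2)) atTop (𝓝 0)

/-- `(X,p)` is `0`-complete. -/
def PZeroComplete {X : Type*} (p : X → X → ℝ) : Prop :=
  ∀ x : ℕ → X, PZeroCauchy p x → ∃ a, PConverges p x a ∧ p a a = 0

/-- A set is sequentially closed with respect to `p`-convergence. -/
def SeqClosed {X : Type*} (p : X → X → ℝ) (A : Set X) : Prop :=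
  ∀ (x : ℕ → X) (a : X), (∀ n, x n ∈ A) → PConverges p x a → a ∈ A

/-- A sequence is Cauchy in `(X,p)`: the double limit `lim_{m,n→∞} p(x n, x m)`
exists (finite). -/
def PCauchy {X : Type*} (p : X → X → ℝ) (x : ℕ → X) : Prop :=
  ∃ L : ℝ, Tendsto (fun mn : ℕ × ℕ => p (x mn.1) (x mn.2)) atTop (𝓝 L)

/-- `(X,p)` is complete: every Cauchy sequence converges to some `a` with
`p(a,a) = lim_{m,n→∞} p(x n, x m)`. -/
def PComplete {X : Type*} (p : X → X → ℝ) : Prop :=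
  ∀ x : ℕ → X, PCauchy p x → ∃ a, PConverges p x a ∧
    Tendsto (fun mn : ℕ × ℕ => p (x mn.1) (x mn.2)) atTop (𝓝 (p a a))

/-- Continuity of `T : X → X` with respect to the open `p`-balls. -/
def PMContinuous {X : Type*} (p : X → X → ℝ) (T : X → X) : Prop :=
  ∀ x₀ : X, ∀ ε > (0:ℝ), ∃ δ > (0:ℝ), ∀ y,
    p x₀ y < p x₀ x₀ + δ → p (T x₀) (T y) < p (T x₀) (T x₀) + ε

/-- A set `A` is `0`-compact: every sequence in `A` has a subsequence converging
to some `a ∈ A` with `lim_{n→∞} p(x (k n), a) = p(a,a) = 0`. -/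
def PZeroCompact {X : Type*} (p : X → X → ℝ) (A : Set X) : Prop :=
  ∀ x : ℕ → X, (∀ n, x n ∈ A) → ∃ (k : ℕ → ℕ) (a : X), StrictMono k ∧ a ∈ A ∧
    Tendsto (fun n => p (x (k n)) a) atTop (𝓝 (p a a)) ∧ p a a = 0

private lemma pm_tri2 {X : Type*} {p : X → X → ℝ} (hp : IsPartialMetric p)
    (a b c : X) : p a c ≤ p a b + p b c := by
  have h := hp.triangle a b c
  have hb := hp.nonneg b b
  linarith

private lemma pm_tri3 {X : Type*} {p : X → X → ℝ} (hp : IsPartialMetric p)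
    (a b c d : X) : p a d ≤ p a b + p b c + p c d := by
  have h1 : p a c ≤ p a b + p b c := pm_tri2 hp a b c
  have h2 : p a d ≤ p a c + p c d := pm_tri2 hp a c d
  linarith

private lemma pm_self_zero {X : Type*} {p : X → X → ℝ} (hp : IsPartialMetric p)
    {A : Set X} (h : PZeroCompact p A) {w : X} (hw : w ∈ A) : p w w = 0 := by
  obtain ⟨s, a, _, _, hten, ha0⟩ := h (fun _ => w) (fun _ => hw)
  have h1 : p w a = p a a := tendsto_nhds_unique tendsto_const_nhds hten
  have h2 : p w w ≤ p w a := hp.self_le w a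
  have h3 : 0 ≤ p w w := hp.nonneg w w
  rw [h1, ha0] at h2
  linarith

private lemma pm_orbit {X : Type*} {k : ℕ} [NeZero k] {A : Fin k → Set X} {T : X → X}
    (hT : ∀ i : Fin k, ∀ x ∈ A i, T x ∈ A (i + 1)) :
    ∀ (t : ℕ) (i : Fin k) (x : X), x ∈ A i → T^[t] x ∈ A (i + (t : Fin k)) := by
  intro t
  induction t with
  | zero => intro i x hx; simpa using hx
  | succ t ih =>
    intro i x hx
    have h1 := hT _ _ (ih i x hx)
    have hidx : i + ((t + 1 : ℕ) : Fin k) = (i + (t : Fin k)) + 1 := by push_cast; ring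
    rw [hidx, Function.iterate_succ_apply']
    exact h1

private lemma pm_step1 {X : Type*} {p : X → X → ℝ} (hp : IsPartialMetric p)
    {k : ℕ} [NeZero k] {A : Fin k → Set X} {T : X → X}
    (hne : ∀ i, (A i).Nonempty)
    {i0 : Fin k} (hcpt : PZeroCompact p (A i0))
    (hT : ∀ i : Fin k, ∀ x ∈ A i, T x ∈ A (i + 1))
    (hcontr : ∀ i : Fin k, ∀ x ∈ A i, ∀ y ∈ A (i + 1), x ≠ y →
      p (T x) (T y) < p x y) :
    ∃ (j : Fin k) (w : X), w ∈ A j ∧ w ∈ A (j + 1) := by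
  have hk1 : ((k - 1 : ℕ) : Fin k) + 1 = 0 := by
    have h1 : ((k - 1 : ℕ) : Fin k) + 1 = ((k - 1 + 1 : ℕ) : Fin k) := by push_cast; ring
    rw [h1, Nat.sub_add_cancel (Nat.one_le_iff_ne_zero.mpr (NeZero.ne k)), Fin.natCast_self]
  set SP : Set ℝ := {d | ∃ x ∈ A i0, ∃ y ∈ A (i0 + 1), p x y = d} with hSPdef
  obtain ⟨x0, hx0⟩ := hne i0
  obtain ⟨y0, hy0⟩ := hne (i0 + 1)
  have hSPne : SP.Nonempty := ⟨p x0 y0, x0, hx0, y0, hy0, rfl⟩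
  have hbdd : BddBelow SP := ⟨0, by rintro d ⟨x, hx, y, hy, rfl⟩; exact hp.nonneg x y⟩
  set δ := sInf SP with hδdef
  have hδle : ∀ x ∈ A i0, ∀ y ∈ A (i0 + 1), δ ≤ p x y := fun x hx y hy =>
    csInf_le hbdd ⟨x, hx, y, hy, rfl⟩
  have hex : ∀ n : ℕ, ∃ q : X × X, q.1 ∈ A i0 ∧ q.2 ∈ A (i0 + 1) ∧
      p q.1 q.2 < δ + 1 / (n + 1) := by
    intro n
    have hpos : (0:ℝ) < 1 / ((n:ℝ) + 1) := by positivity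
    obtain ⟨d, hd, hlt⟩ := exists_lt_of_csInf_lt hSPne
      (show sInf SP < δ + 1 / ((n:ℝ) + 1) by rw [← hδdef]; linarith)
    obtain ⟨x, hx, y, hy, rfl⟩ := hd
    exact ⟨(x, y), hx, hy, hlt⟩
  choose q hq1 hq2 hq3 using hex
  set xs : ℕ → X := fun n => (q n).1 with hxsdef
  set ys : ℕ → X := fun n => (q n).2 with hysdef
  have hlim1 : Tendsto (fun n : ℕ => δ + 1 / ((n:ℝ) + 1)) atTop (𝓝 δ) := by
    have := tendsto_const_nhds (x := δ) (f := atTop (α := ℕ)) |>.add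
      tendsto_one_div_add_atTop_nhds_zero_nat
    simpa using this
  have hcten : Tendsto (fun n => p (xs n) (ys n)) atTop (𝓝 δ) := by
    refine tendsto_of_tendsto_of_tendsto_of_le_of_le tendsto_const_nhds hlim1 ?_ ?_
    · exact fun n => hδle _ (hq1 n) _ (hq2 n)
    · exact fun n => (hq3 n).le
  obtain ⟨s, xst, hsm, hxstA, hxst_t, hxst0⟩ := hcpt xs hq1
  have hxz : Tendsto (fun n => p xst (xs (s n))) atTop (𝓝 0) := by
    have heq : (fun n => p xst (xs (s n))) = fun n => p (xs (s n)) xst := by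
      funext n; exact hp.symm _ _
    rw [heq, ← hxst0]
    exact hxst_t
  have hyδ : Tendsto (fun n => p xst (ys (s n))) atTop (𝓝 δ) := by
    have hup : ∀ n, p xst (ys (s n)) ≤ p xst (xs (s n)) + p (xs (s n)) (ys (s n)) :=
      fun n => pm_tri2 hp _ _ _
    have hlow : ∀ n, δ ≤ p xst (ys (s n)) := fun n => hδle _ hxstA _ (hq2 (s n))
    have hupt : Tendsto (fun n => p xst (xs (s n)) + p (xs (s n)) (ys (s n))) atTop
        (𝓝 (0 + δ)) := hxz.add (hcten.comp hsm.tendsto_atTop)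
    rw [zero_add] at hupt
    exact tendsto_of_tendsto_of_tendsto_of_le_of_le tendsto_const_nhds hupt hlow hup
  by_cases hcol : ∃ (n : ℕ) (jj : ℕ), jj < k ∧ T^[jj] xst = T^[jj] (ys (s n))
  · obtain ⟨n, jj, _, heq⟩ := hcol
    refine ⟨i0 + (jj : Fin k), T^[jj] xst, pm_orbit hT jj i0 xst hxstA, ?_⟩
    have h2 := pm_orbit hT jj (i0 + 1) (ys (s n)) (hq2 (s n))
    have hidx : i0 + 1 + (jj : Fin k) = i0 + (jj : Fin k) + 1 := by ring
    rw [heq, ← hidx]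
    exact h2
  · push_neg at hcol
    have hchain : ∀ n : ℕ, ∀ jj : ℕ, jj < k →
        p (T^[jj] xst) (T^[jj] (ys (s n))) ≤ p xst (ys (s n)) := by
      intro n jj
      induction jj with
      | zero => intro _; simp
      | succ m ih =>
        intro hm1
        have hm : m < k := Nat.lt_of_succ_lt hm1
        have hmem2 : T^[m] (ys (s n)) ∈ A (i0 + (m : Fin k) + 1) := by
          have h2 := pm_orbit hT m (i0 + 1) (ys (s n)) (hq2 (s n))
          have hidx : i0 + 1 + (m : Fin k) = i0 + (m : Fin k) + 1 := by ring
          rwa [hidx] at h2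
        have hlt := hcontr (i0 + (m : Fin k)) _ (pm_orbit hT m i0 xst hxstA) _ hmem2
          (hcol n m hm)
        rw [Function.iterate_succ_apply', Function.iterate_succ_apply']
        exact le_trans hlt.le (ih hm)
    have hkm1 : k - 1 < k := Nat.sub_lt (Nat.pos_of_ne_zero (NeZero.ne k)) one_pos
    have hidx0 : i0 + ((k - 1 : ℕ) : Fin k) + 1 = i0 := by
      rw [add_assoc, hk1, add_zero]
    have hymem : ∀ n, T^[k-1] (ys (s n)) ∈ A i0 := by
      intro n
      have h2 := pm_orbit hT (k-1) (i0 + 1) (ys (s n)) (hq2 (s n))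
      have hidx : i0 + 1 + ((k-1:ℕ) : Fin k) = i0 := by
        have h3 : i0 + 1 + ((k-1:ℕ) : Fin k) = i0 + (((k-1:ℕ) : Fin k) + 1) := by ring
        rw [h3, hk1, add_zero]
      rwa [hidx] at h2
    obtain ⟨t, yst, htm, hystA, hyst_t, hyst0⟩ := hcpt (fun n => T^[k-1] (ys (s n))) hymem
    have hyst_t0 : Tendsto (fun n => p (T^[k-1] (ys (s (t n)))) yst) atTop (𝓝 0) := by
      rw [← hyst0]; exact hyst_t
    have hub : p (T^[k-1] xst) yst ≤ δ := by
      have hb : ∀ n, p (T^[k-1] xst) yst ≤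
          p xst (ys (s (t n))) + p (T^[k-1] (ys (s (t n)))) yst := by
        intro n
        calc p (T^[k-1] xst) yst
            ≤ p (T^[k-1] xst) (T^[k-1] (ys (s (t n)))) + p (T^[k-1] (ys (s (t n)))) yst :=
              pm_tri2 hp _ _ _
          _ ≤ _ := add_le_add_left (hchain (t n) (k-1) hkm1) _
      have hrt : Tendsto (fun n => p xst (ys (s (t n))) + p (T^[k-1] (ys (s (t n)))) yst)
          atTop (𝓝 (δ + 0)) := (hyδ.comp htm.tendsto_atTop).add hyst_t0
      rw [add_zero] at hrt
      exact ge_of_tendsto hrt (Filter.Eventually.of_forall hb)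
    by_cases heq : T^[k-1] xst = yst
    · refine ⟨i0 + ((k-1:ℕ) : Fin k), yst, ?_, ?_⟩
      · rw [← heq]; exact pm_orbit hT (k-1) i0 xst hxstA
      · rw [hidx0]; exact hystA
    · exfalso
      have hmem1 : T^[k-1] xst ∈ A (i0 + ((k-1:ℕ):Fin k)) := pm_orbit hT (k-1) i0 xst hxstA
      have hmemy : yst ∈ A (i0 + ((k-1:ℕ):Fin k) + 1) := by rw [hidx0]; exact hystA
      have hlt := hcontr _ _ hmem1 _ hmemy heq
      have hTm : T (T^[k-1] xst) ∈ A i0 := by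
        have h2 := hT _ _ hmem1
        rwa [hidx0] at h2
      have hTy : T yst ∈ A (i0 + 1) := hT i0 yst hystA
      have hge := hδle _ hTm _ hTy
      linarith

private lemma pm_fix {X : Type*} {p : X → X → ℝ} (hp : IsPartialMetric p)
    {T : X → X} {S : Set X}
    (hSne : S.Nonempty) (hcpt : PZeroCompact p S) (hTS : ∀ x ∈ S, T x ∈ S)
    (hc : ∀ x ∈ S, ∀ y ∈ S, x ≠ y → p (T x) (T y) < p x y) :
    ∃ z ∈ S, T z = z := by
  obtain ⟨x0, hx0⟩ := hSne
  set x : ℕ → X := fun n => T^[n] x0 with hxdef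
  have hstep : ∀ n, x (n + 1) = T (x n) := fun n => Function.iterate_succ_apply' T n x0
  have hxS : ∀ n, x n ∈ S := by
    intro n
    induction n with
    | zero => exact hx0
    | succ m ih => rw [hstep m]; exact hTS _ ih
  by_cases hfix : ∃ n, x (n + 1) = x n
  · obtain ⟨n, hn⟩ := hfix
    exact ⟨x n, hxS n, by rw [← hstep n]; exact hn⟩
  · push_neg at hfix
    set c : ℕ → ℝ := fun n => p (x n) (x (n + 1)) with hcdef
    have hcdec : ∀ n, c (n + 1) < c n := by
      intro n
      have h := hc (x n) (hxS n) (x (n + 1)) (hxS (n + 1)) (fun h => hfix n h.symm)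
      have e1 : x (n + 1) = T (x n) := hstep n
      have e2 : x (n + 2) = T (x (n + 1)) := hstep (n + 1)
      show p (x (n+1)) (x (n+2)) < p (x n) (x (n+1))
      rw [e2]
      calc p (x (n+1)) (T (x (n+1))) = p (T (x n)) (T (x (n+1))) := by rw [← e1]
        _ < p (x n) (x (n+1)) := h
    have hanti : Antitone c := antitone_nat_of_succ_le (fun n => (hcdec n).le)
    have hbddc : BddBelow (Set.range c) :=
      ⟨0, by rintro _ ⟨n, rfl⟩; exact hp.nonneg _ _⟩
    set r := ⨅ n, c n with hrdef
    have hcr : Tendsto c atTop (𝓝 r) := tendsto_atTop_ciInf hanti hbddc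
    have hrle : ∀ n, r ≤ c n := fun n => ciInf_le hbddc n
    obtain ⟨s, z, hsm, hzS, hzt, hz0⟩ := hcpt x hxS
    have hzt0 : Tendsto (fun n => p (x (s n)) z) atTop (𝓝 0) := by rw [← hz0]; exact hzt
    have hxz : Tendsto (fun n => p z (x (s n))) atTop (𝓝 0) := by
      have heq : (fun n => p z (x (s n))) = fun n => p (x (s n)) z := by
        funext n; exact hp.symm _ _
      rw [heq]; exact hzt0
    have hTz0 : p (T z) (T z) = 0 := pm_self_zero hp hcpt (hTS z hzS)
    have hTTz0 : p (T (T z)) (T (T z)) = 0 := pm_self_zero hp hcpt (hTS _ (hTS z hzS))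
    have h1 : ∀ n, p (T z) (x (s n + 1)) ≤ p z (x (s n)) := by
      intro n
      rw [hstep (s n)]
      by_cases h : z = x (s n)
      · rw [← h, hTz0]; exact hp.nonneg z z
      · exact (hc z hzS (x (s n)) (hxS _) h).le
    have h2 : ∀ n, p (T (T z)) (x (s n + 1 + 1)) ≤ p (T z) (x (s n + 1)) := by
      intro n
      rw [hstep (s n + 1)]
      by_cases h : T z = x (s n + 1)
      · rw [← h, hTTz0]; exact hp.nonneg _ _
      · exact (hc (T z) (hTS z hzS) (x (s n + 1)) (hxS _) h).le
    have hTzx : Tendsto (fun n => p (T z) (x (s n + 1))) atTop (𝓝 0) := by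
      refine tendsto_of_tendsto_of_tendsto_of_le_of_le tendsto_const_nhds hxz
        (fun n => hp.nonneg _ _) h1
    have hTTzx : Tendsto (fun n => p (T (T z)) (x (s n + 1 + 1))) atTop (𝓝 0) := by
      refine tendsto_of_tendsto_of_tendsto_of_le_of_le tendsto_const_nhds hTzx
        (fun n => hp.nonneg _ _) h2
    have hcs : Tendsto (fun n => c (s n)) atTop (𝓝 r) := hcr.comp hsm.tendsto_atTop
    have hcs1 : Tendsto (fun n => c (s n + 1)) atTop (𝓝 r) := by
      refine tendsto_of_tendsto_of_tendsto_of_le_of_le tendsto_const_nhds hcs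
        (fun n => hrle _) (fun n => (hcdec (s n)).le)
    have h3 : p z (T z) ≤ r := by
      have hb : ∀ n, p z (T z) ≤ p z (x (s n)) + c (s n) + p (x (s n + 1)) (T z) := by
        intro n
        exact pm_tri3 hp z (x (s n)) (x (s n + 1)) (T z)
      have hsymt : Tendsto (fun n => p (x (s n + 1)) (T z)) atTop (𝓝 0) := by
        have heq : (fun n => p (x (s n + 1)) (T z)) = fun n => p (T z) (x (s n + 1)) := by
          funext n; exact hp.symm _ _
        rw [heq]; exact hTzx
      have hrt : Tendsto (fun n => p z (x (s n)) + c (s n) + p (x (s n + 1)) (T z))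
          atTop (𝓝 (0 + r + 0)) := (hxz.add hcs).add hsymt
      rw [zero_add, add_zero] at hrt
      exact ge_of_tendsto hrt (Filter.Eventually.of_forall hb)
    have h4 : r ≤ p (T z) (T (T z)) := by
      have hb : ∀ n, c (s n + 1) ≤
          p (x (s n + 1)) (T z) + p (T z) (T (T z)) + p (T (T z)) (x (s n + 1 + 1)) := by
        intro n
        exact pm_tri3 hp (x (s n + 1)) (T z) (T (T z)) (x (s n + 1 + 1))
      have hsymt : Tendsto (fun n => p (x (s n + 1)) (T z)) atTop (𝓝 0) := by
        have heq : (fun n => p (x (s n + 1)) (T z)) = fun n => p (T z) (x (s n + 1)) := by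
          funext n; exact hp.symm _ _
        rw [heq]; exact hTzx
      have hrt : Tendsto (fun n => p (x (s n + 1)) (T z) + p (T z) (T (T z))
          + p (T (T z)) (x (s n + 1 + 1))) atTop (𝓝 (0 + p (T z) (T (T z)) + 0)) :=
        (hsymt.add tendsto_const_nhds).add hTTzx
      rw [zero_add, add_zero] at hrt
      exact le_of_tendsto_of_tendsto' hcs1 hrt hb
    by_cases hzT : z = T z
    · exact ⟨z, hzS, hzT.symm⟩
    · exfalso
      have h5 := hc z hzS (T z) (hTS z hzS) hzT
      linarith

/-- Edelstein-type theorem for cyclical mappings when one of the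
sets of the cyclic decomposition is `0`-compact. -/
theorem cyclic_edelstein {X : Type*} (p : X → X → ℝ)
    (hp : IsPartialMetric p)
    (k : ℕ) [NeZero k] (A : Fin k → Set X)
    (hne : ∀ i, (A i).Nonempty) (hcl : ∀ i, SeqClosed p (A i))
    (hcompact : ∃ i, PZeroCompact p (A i))
    (T : X → X) (hT : ∀ i : Fin k, ∀ x ∈ A i, T x ∈ A (i + 1))
    (hcontr : ∀ i : Fin k, ∀ x ∈ A i, ∀ y ∈ A (i + 1), x ≠ y →
      p (T x) (T y) < p x y) :
    ∃ z, T z = z ∧ (∀ i, z ∈ A i) ∧ ∀ w ∈ ⋃ i, A i, T w = w → w = z := by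
  obtain ⟨i0, hcpt0⟩ := hcompact
  -- stage induction: iterated consecutive intersections keep all hypotheses
  have stage : ∀ m : ℕ, ∃ B : Fin k → Set X,
      (∀ (i : Fin k) (x : X), x ∈ B i ↔ ∀ t : ℕ, t ≤ m → x ∈ A (i + (t : Fin k))) ∧
      (∀ i, (B i).Nonempty) ∧ (∀ i, SeqClosed p (B i)) ∧ PZeroCompact p (B i0) ∧
      (∀ i : Fin k, ∀ x ∈ B i, T x ∈ B (i + 1)) ∧
      (∀ i : Fin k, ∀ x ∈ B i, ∀ y ∈ B (i + 1), x ≠ y → p (T x) (T y) < p x y) := by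
    intro m
    induction m with
    | zero =>
      refine ⟨A, ?_, hne, hcl, hcpt0, hT, hcontr⟩
      intro i x
      constructor
      · intro hx t ht
        have h0 : t = 0 := Nat.le_zero.mp ht
        subst h0
        simpa using hx
      · intro h
        have := h 0 le_rfl
        simpa using this
    | succ m ih =>
      obtain ⟨B, hBc, hBne, hBcl, hBcpt, hBT, hBcontr⟩ := ih
      set B' : Fin k → Set X := fun i => B i ∩ B (i + 1) with hB'def
      have hchar : ∀ (i : Fin k) (x : X),
          x ∈ B' i ↔ ∀ t : ℕ, t ≤ m + 1 → x ∈ A (i + (t : Fin k)) := by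
        intro i x
        constructor
        · rintro ⟨h1, h2⟩ t ht
          rcases t with _ | t'
          · exact (hBc i x).mp h1 0 (Nat.zero_le m)
          · have ht' : t' ≤ m := Nat.succ_le_succ_iff.mp ht
            have h3 := (hBc (i + 1) x).mp h2 t' ht'
            have hidx : i + 1 + (t' : Fin k) = i + ((t' + 1 : ℕ) : Fin k) := by
              push_cast; ring
            rwa [hidx] at h3
        · intro h
          constructor
          · exact (hBc i x).mpr (fun t ht => h t (Nat.le_succ_of_le ht))
          · refine (hBc (i + 1) x).mpr (fun t ht => ?_)
            have h3 := h (t + 1) (Nat.succ_le_succ ht)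
            have hidx : i + 1 + (t : Fin k) = i + ((t + 1 : ℕ) : Fin k) := by
              push_cast; ring
            rwa [← hidx] at h3
      have htb : ∀ i : Fin k, ∀ x ∈ B' i, T x ∈ B' (i + 1) := by
        rintro i x ⟨h1, h2⟩
        exact ⟨hBT i x h1, hBT (i + 1) x h2⟩
      have hclB' : ∀ i, SeqClosed p (B' i) := by
        intro i xx a hmem hconv
        exact ⟨hBcl i xx a (fun n => (hmem n).1) hconv,
          hBcl (i + 1) xx a (fun n => (hmem n).2) hconv⟩
      have hcptB' : PZeroCompact p (B' i0) := by
        intro xx hxx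
        obtain ⟨s, a, hsm, haB, hten, h0⟩ := hBcpt xx (fun n => (hxx n).1)
        have haB1 : a ∈ B (i0 + 1) := by
          refine hBcl (i0 + 1) (fun n => xx (s n)) a (fun n => (hxx (s n)).2) ?_
          show Tendsto (fun n => p a (xx (s n))) atTop (𝓝 (p a a))
          have heq : (fun n => p a (xx (s n))) = fun n => p (xx (s n)) a := by
            funext n; exact hp.symm _ _
          rw [heq]
          exact hten
        exact ⟨s, a, hsm, ⟨haB, haB1⟩, hten, h0⟩
      have hcontrB' : ∀ i : Fin k, ∀ x ∈ B' i, ∀ y ∈ B' (i + 1), x ≠ y →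
          p (T x) (T y) < p x y := by
        rintro i x ⟨hx1, _⟩ y ⟨hy1, _⟩ hxy
        exact hBcontr i x hx1 y hy1 hxy
      have hneB' : ∀ i, (B' i).Nonempty := by
        obtain ⟨j, w, hw1, hw2⟩ := pm_step1 hp hBne hBcpt hBT hBcontr
        intro i
        have hw' : w ∈ B' j := ⟨hw1, hw2⟩
        have horb := pm_orbit htb ((i - j).val) j w hw'
        rw [Fin.cast_val_eq_self] at horb
        have hidx : j + (i - j) = i := by ring
        rw [hidx] at horb
        exact ⟨_, horb⟩
      exact ⟨B', hchar, hneB', hclB', hcptB', htb, hcontrB'⟩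
  obtain ⟨B, hBc, hBne, hBcl, hBcpt, hBT, hBcontr⟩ := stage (k - 1)
  have hkpos : 0 < k := Nat.pos_of_ne_zero (NeZero.ne k)
  -- every element of any B i lies in every A j
  have hall : ∀ (i : Fin k) (x : X), x ∈ B i → ∀ j, x ∈ A j := by
    intro i x hx j
    have ht : ((j - i).val : ℕ) ≤ k - 1 := by
      have := (j - i).isLt
      omega
    have h1 := (hBc i x).mp hx ((j - i).val) ht
    rw [Fin.cast_val_eq_self] at h1
    have hidx : i + (j - i) = j := by ring
    rwa [hidx] at h1
  have hSne : (B i0).Nonempty := hBne i0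
  have hTS : ∀ x ∈ B i0, T x ∈ B i0 := by
    intro x hx
    have h1 := hBT i0 x hx
    refine (hBc i0 (T x)).mpr (fun t _ => hall (i0 + 1) (T x) h1 _)
  have hcS : ∀ x ∈ B i0, ∀ y ∈ B i0, x ≠ y → p (T x) (T y) < p x y := by
    intro x hx y hy hxy
    exact hcontr i0 x (hall i0 x hx i0) y (hall i0 y hy (i0 + 1)) hxy
  obtain ⟨z, hzS, hzfix⟩ := pm_fix hp hSne hBcpt hTS hcS
  have hzall : ∀ i, z ∈ A i := hall i0 z hzS
  refine ⟨z, hzfix, hzall, ?_⟩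
  intro w hw hfw
  obtain ⟨i₁, hwA⟩ := Set.mem_iUnion.mp hw
  have hwall : ∀ i, w ∈ A i := by
    intro i
    have horb := pm_orbit hT ((i - i₁).val) i₁ w hwA
    rw [Function.iterate_fixed hfw, Fin.cast_val_eq_self] at horb
    have hidx : i₁ + (i - i₁) = i := by ring
    rwa [hidx] at horb
  by_contra hne'
  have h1 := hcontr i0 w (hwall i0) z (hzall (i0 + 1)) hne'
  rw [hfw, hzfix] at h1
  exact lt_irrefl _ h1
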